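/- Let P be a Köthe set on a set I satisfying condition (B) (P ∼ P²) and condition (N). Then for every a ∈ λ(P), every p ∈ P, and every ε > 0, there exists a finite subset J ⊆ I such that (sup_{i ∈ I∖J} |a_i| p_i) · (1 + sup_{j ∈ J} p_j) < ε. -/

import Mathlib

set_option maxHeartbeats 1000000


/-- If a Köthe set `P` on `I` satisfies conditions (B) and (N), then for
every `a ∈ λ(P)`, `p ∈ P` and `ε > 0` there is a finite `J ⊆ I` with
`(sup_{i ∉ J} |aᵢ| pᵢ) · (1 + sup_{j ∈ J} pⱼ) < ε`. -/
theorem kothe_approx_identity_estimate {I : Type*} (P : Set (I → ℝ))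
    (hP0 : ∀ p ∈ P, ∀ i, 0 ≤ p i)
    (hP1 : ∀ i, ∃ p ∈ P, 0 < p i)
    (hP2 : ∀ p ∈ P, ∀ q ∈ P, ∃ r ∈ P, ∀ i, max (p i) (q i) ≤ r i)
    (hB1 : ∀ p ∈ P, ∃ q ∈ P, ∃ C : ℝ, 0 < C ∧ ∀ i, p i ≤ C * (q i) ^ 2)
    (hB2 : ∀ q ∈ P, ∃ p ∈ P, ∃ C : ℝ, 0 < C ∧ ∀ i, (q i) ^ 2 ≤ C * p i)
    (hN : ∀ p ∈ P, ∃ q ∈ P, ∃ α : I → ℝ, (Summable fun i => |α i|) ∧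
      ∀ i, p i ≤ α i * q i) :
    ∀ a : I → ℂ, (∀ p ∈ P, Summable fun i => ‖a i‖ * p i) →
      ∀ p ∈ P, ∀ ε : ℝ, 0 < ε →
        ∃ J : Finset I,
          (⨆ i : {i : I // i ∉ J}, ‖a i.1‖ * p i.1) *
            (1 + ⨆ j : J, p j) < ε := by
  intro a ha p hp ε hε
  obtain ⟨q, hq, α, hα, hpq⟩ := hN p hp
  obtain ⟨w, hw, C₁, hC₁, hqw⟩ := hB2 q hq
  obtain ⟨u, hu, C₂, hC₂, hwu⟩ := hB2 w hw
  set A : ℝ := (∑' i, |α i|) + 1 with hAdef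
  have htsnn : 0 ≤ ∑' i, |α i| := tsum_nonneg fun i => abs_nonneg _
  have hA1 : 1 ≤ A := by simp only [hAdef]; linarith
  have hA0 : (0:ℝ) < A := by linarith
  have hαA : ∀ i, α i ≤ A := by
    intro i
    have h1 : |α i| ≤ ∑' j, |α j| := Summable.le_tsum hα i fun j _ => abs_nonneg _
    have h2 := le_abs_self (α i)
    simp only [hAdef]; linarith
  have hsumu := ha u hu
  set M : ℝ := ∑' i, ‖a i‖ * u i with hMdef
  have hM0 : 0 ≤ M := tsum_nonneg fun i => mul_nonneg (norm_nonneg _) (hP0 u hu i)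
  have hMle : ∀ i, ‖a i‖ * u i ≤ M := fun i =>
    Summable.le_tsum hsumu i fun j _ => mul_nonneg (norm_nonneg _) (hP0 u hu j)
  set C : ℝ := C₁ ^ 2 * C₂ with hCdef
  have hC : 0 < C := by positivity
  have hq4 : ∀ i, (q i) ^ 4 ≤ C * u i := by
    intro i
    have h1 := hqw i
    have h2 := hwu i
    have hwnn := hP0 w hw i
    have hqnn := hP0 q hq i
    calc (q i) ^ 4 = ((q i) ^ 2) ^ 2 := by ring
      _ ≤ (C₁ * w i) ^ 2 := pow_le_pow_left₀ (by positivity) h1 2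
      _ = C₁ ^ 2 * (w i) ^ 2 := by ring
      _ ≤ C₁ ^ 2 * (C₂ * u i) := by nlinarith
      _ = C * u i := by rw [hCdef]; ring
  set K : ℝ := max 1 (C * M * A) with hKdef
  have hK1 : (1:ℝ) ≤ K := le_max_left _ _
  have hK0 : (0:ℝ) < K := by linarith
  have hKD : C * M * A ≤ K := le_max_right _ _
  have hKsq : 1 ≤ K ^ 2 := by nlinarith
  have hK3 : C * M * A ≤ K ^ 3 := by
    refine le_trans hKD ?_
    nlinarith [mul_nonneg hK0.le (sub_nonneg.mpr hKsq)]
  set δ : ℝ := min 1 (ε / (2 * (1 + A * K))) with hδdef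
  have hAK : (0:ℝ) < 1 + A * K := by positivity
  have hδpos : 0 < δ := lt_min one_pos (by positivity)
  have hδ1 : δ ≤ 1 := min_le_left _ _
  have hδε : δ ≤ ε / (2 * (1 + A * K)) := min_le_right _ _
  have hδ3 : 0 < δ ^ 3 := by positivity
  have hev : ∀ᶠ i in Filter.cofinite, ‖a i‖ * p i < δ ^ 3 :=
    (ha p hp).tendsto_cofinite_zero.eventually_lt_const hδ3
  have hfin : {i | ¬ ‖a i‖ * p i < δ ^ 3}.Finite :=
    Filter.eventually_cofinite.mp hev
  refine ⟨hfin.toFinset, ?_⟩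
  have hS : (⨆ i : {i : I // i ∉ hfin.toFinset}, ‖a i.1‖ * p i.1) ≤ δ ^ 3 := by
    apply Real.iSup_le _ hδ3.le
    rintro ⟨i, hi⟩
    simp only [Set.Finite.mem_toFinset, Set.mem_setOf_eq, not_not] at hi
    exact hi.le
  have hT : (⨆ j : hfin.toFinset, p j) ≤ A * K / δ := by
    apply Real.iSup_le _ (by positivity)
    rintro ⟨j, hj⟩
    simp only [Set.Finite.mem_toFinset, Set.mem_setOf_eq, not_lt] at hj
    -- hj : δ ^ 3 ≤ |a j| * p j
    set t : ℝ := ‖a j‖ with htdef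
    have ht0 : 0 ≤ t := norm_nonneg _
    have hq0 : 0 ≤ q j := hP0 q hq j
    have h1 : δ ^ 3 ≤ α j * (t * q j) := by
      have := hpq j
      nlinarith [hj]
    have htq0 : 0 ≤ t * q j := mul_nonneg ht0 hq0
    have h2 : δ ^ 3 ≤ A * (t * q j) := by
      have := mul_le_mul_of_nonneg_right (hαA j) htq0
      linarith
    have h3 : δ ^ 3 / A ≤ t * q j := by
      rw [div_le_iff₀ hA0]; linarith
    have h4 : t * (q j) ^ 4 ≤ C * M := by
      calc t * (q j) ^ 4 ≤ t * (C * u j) :=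
            mul_le_mul_of_nonneg_left (hq4 j) ht0
        _ = C * (t * u j) := by ring
        _ ≤ C * M := mul_le_mul_of_nonneg_left (hMle j) hC.le
    have h5 : (q j) ^ 3 * (δ ^ 3 / A) ≤ C * M := by
      calc (q j) ^ 3 * (δ ^ 3 / A) ≤ (q j) ^ 3 * (t * q j) :=
            mul_le_mul_of_nonneg_left h3 (by positivity)
        _ = t * (q j) ^ 4 := by ring
        _ ≤ C * M := h4
    have h6 : (q j) ^ 3 * δ ^ 3 ≤ C * M * A := by
      have h5' := mul_le_mul_of_nonneg_right h5 hA0.le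
      have heq : (q j) ^ 3 * (δ ^ 3 / A) * A = (q j) ^ 3 * δ ^ 3 := by
        field_simp
      rw [heq] at h5'
      linarith
    have h7 : (q j) ^ 3 ≤ (K / δ) ^ 3 := by
      rw [div_pow, le_div_iff₀ hδ3]
      linarith
    have h8 : q j ≤ K / δ := le_of_pow_le_pow_left₀ (by norm_num) (by positivity) h7
    calc p j ≤ α j * q j := hpq j
      _ ≤ A * q j := mul_le_mul_of_nonneg_right (hαA j) hq0
      _ ≤ A * (K / δ) := mul_le_mul_of_nonneg_left h8 hA0.le
      _ = A * K / δ := by ring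
  have hS0 : 0 ≤ ⨆ i : {i : I // i ∉ hfin.toFinset}, ‖a i.1‖ * p i.1 :=
    Real.iSup_nonneg fun i => mul_nonneg (norm_nonneg _) (hP0 p hp _)
  have hT0 : 0 ≤ ⨆ j : hfin.toFinset, p j :=
    Real.iSup_nonneg fun j => hP0 p hp _
  have hmain : (⨆ i : {i : I // i ∉ hfin.toFinset}, ‖a i.1‖ * p i.1) *
      (1 + ⨆ j : hfin.toFinset, p j) ≤ δ ^ 3 * (1 + A * K / δ) :=
    mul_le_mul hS (by linarith) (by linarith) hδ3.le
  refine lt_of_le_of_lt hmain ?_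
  have heq : δ ^ 3 * (1 + A * K / δ) = δ ^ 3 + δ ^ 2 * (A * K) := by
    field_simp
  rw [heq]
  have hAK0 : (0:ℝ) ≤ A * K := by positivity
  have e1 : δ ^ 3 ≤ δ := by
    nlinarith [mul_nonneg (mul_nonneg hδpos.le (sub_nonneg.mpr hδ1)) (show (0:ℝ) ≤ 1 + δ by linarith)]
  have e2 : δ ^ 2 * (A * K) ≤ δ * (A * K) := by
    nlinarith [mul_nonneg (mul_nonneg hδpos.le (sub_nonneg.mpr hδ1)) hAK0]
  have e3 : δ * (2 * (1 + A * K)) ≤ ε := by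
    rw [← le_div_iff₀ (by positivity)]; exact hδε
  nlinarith [e1, e2, e3, mul_nonneg hδpos.le hAK0]
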